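/- Let γ > 0, a > 0, p > 4, and let u ∈ H¹(ℝ²) with ‖u‖₂² = c. Set Q(u) = A(u) − a(p−2)/p · C(u) − γc²/4 and k₀ = (p−2)γc²/(4(p−4)). If Q(u) ≤ 0 and A(u) = k₀, then c ≥ c₀ := 2[ p(p−4)^{(p−4)/2} / ((p−2)^{p/2} a γ^{(p−4)/2} K_GN) ]^{1/(p−3)}. In particular, if Q(u) ≤ 0 and c < c₀ then A(u) ≠ k₀. -/

import Mathlib

open MeasureTheory

noncomputable section

/-- The kinetic energy `A(u) = ∫_{ℝ²} |∇u|²`. -/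
def gradNormSq (u : EuclideanSpace ℝ (Fin 2) → ℝ) : ℝ :=
  ∫ x : EuclideanSpace ℝ (Fin 2), ‖fderiv ℝ u x‖ ^ 2

/-- `C(u) = ∫_{ℝ²} |u|^p`. -/
def Cpow (p : ℝ) (u : EuclideanSpace ℝ (Fin 2) → ℝ) : ℝ :=
  ∫ x : EuclideanSpace ℝ (Fin 2), |u x| ^ p

/-- If `γ > 0`, `a > 0`, `p > 4`, `‖u‖₂² = c`, `Q(u) ≤ 0` and `A(u) = k₀`, then `c ≥ c₀`. -/
-- pure algebra core lemma
private theorem core (γ a p c KGN A C : ℝ) (hγ : 0 < γ) (ha : 0 < a) (hp : 4 < p) (hc : 0 < c)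
    (hKGN : 0 < KGN)
    (hGN : C ≤ KGN * A ^ (p / 2 - 1) * c)
    (hQ : A - a * (p - 2) / p * C - γ * c ^ 2 / 4 ≤ 0)
    (hA : A = (p - 2) * γ * c ^ 2 / (4 * (p - 4))) :
    c ≥ 2 * ((p * (p - 4) ^ ((p - 4) / 2))
        / ((p - 2) ^ (p / 2) * a * γ ^ ((p - 4) / 2) * KGN)) ^ (1 / (p - 3)) := by
  have hp2 : (0:ℝ) < p - 2 := by linarith
  have hp3 : (0:ℝ) < p - 3 := by linarith
  have hp4 : (0:ℝ) < p - 4 := by linarith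
  have hp0 : (0:ℝ) < p := by linarith
  set B : ℝ := (p - 2) * γ / (4 * (p - 4)) with hB
  have hB0 : 0 < B := by positivity
  set D : ℝ := a * (p - 2) / p * KGN * B ^ (p / 2 - 1) with hD
  have hD0 : 0 < D := by positivity
  set X : ℝ := (p * (p - 4) ^ ((p - 4) / 2))
        / ((p - 2) ^ (p / 2) * a * γ ^ ((p - 4) / 2) * KGN) with hX
  have hX0 : 0 < X := by positivity
  have hstep : γ * c ^ 2 / (2 * (p - 4)) ≤ a * (p - 2) / p * (KGN * A ^ (p / 2 - 1) * c) := by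
    have h1 : A - γ * c ^ 2 / 4 = γ * c ^ 2 / (2 * (p - 4)) := by
      rw [hA]; field_simp; ring
    have h2 : a * (p - 2) / p * C ≤ a * (p - 2) / p * (KGN * A ^ (p / 2 - 1) * c) :=
      mul_le_mul_of_nonneg_left hGN (by positivity)
    linarith
  have hApow : A ^ (p / 2 - 1) = B ^ (p / 2 - 1) * c ^ (p - 2) := by
    rw [hA, show (p - 2) * γ * c ^ 2 / (4 * (p - 4)) = B * c ^ 2 by rw [hB]; ring,
      Real.mul_rpow hB0.le (by positivity)]
    congr 1
    rw [← Real.rpow_natCast c 2, ← Real.rpow_mul hc.le]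
    congr 1
    push_cast; ring
  have e1 : c ^ (p - 2) * c = c ^ (p - 1) := by
    nth_rewrite 2 [← Real.rpow_one c]
    rw [← Real.rpow_add hc]; congr 1; ring
  have e2 : c ^ (p - 3) * c ^ 2 = c ^ (p - 1) := by
    rw [← Real.rpow_natCast c 2, ← Real.rpow_add hc]; congr 1; push_cast; ring
  have hmain : γ / (2 * (p - 4)) ≤ D * c ^ (p - 3) := by
    have hc2 : (0:ℝ) < c ^ 2 := by positivity
    have h3 : γ * c ^ 2 / (2 * (p - 4)) ≤ D * c ^ (p - 3) * c ^ 2 := by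
      calc γ * c ^ 2 / (2 * (p - 4)) ≤ a * (p - 2) / p * (KGN * A ^ (p / 2 - 1) * c) := hstep
        _ = D * (c ^ (p - 2) * c) := by rw [hApow, hD]; ring
        _ = D * c ^ (p - 1) := by rw [e1]
        _ = D * c ^ (p - 3) * c ^ 2 := by rw [← e2]; ring
    have h4 : γ / (2 * (p - 4)) * c ^ 2 ≤ D * c ^ (p - 3) * c ^ 2 := by
      rw [show γ / (2 * (p - 4)) * c ^ 2 = γ * c ^ 2 / (2 * (p - 4)) by ring]; exact h3
    exact le_of_mul_le_mul_right h4 hc2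
  have hlogB : Real.log B = Real.log (p - 2) + Real.log γ - (2 * Real.log 2 + Real.log (p - 4)) := by
    rw [hB, Real.log_div (by positivity) (by positivity), Real.log_mul hp2.ne' hγ.ne',
      Real.log_mul (by norm_num) hp4.ne',
      show Real.log 4 = 2 * Real.log 2 by
        rw [show (4:ℝ) = 2 ^ (2:ℕ) by norm_num, Real.log_pow]; push_cast; ring]
  have key2 : Real.exp (Real.log 2 * (p - 3)) * Real.exp (Real.log (p - 4) * ((p - 4) / 2)) *
      Real.exp ((Real.log (p - 2) + Real.log γ - (2 * Real.log 2 + Real.log (p - 4))) * (p / 2 - 1)) /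
      (Real.exp (Real.log (p - 2) * (p / 2)) * Real.exp (Real.log γ * ((p - 4) / 2))) =
      γ / (2 * (p - 4) * (p - 2)) := by
    rw [← Real.exp_add, ← Real.exp_add, ← Real.exp_add, ← Real.exp_sub,
      show Real.log 2 * (p - 3) + Real.log (p - 4) * ((p - 4) / 2) +
        (Real.log (p - 2) + Real.log γ - (2 * Real.log 2 + Real.log (p - 4))) * (p / 2 - 1) -
        (Real.log (p - 2) * (p / 2) + Real.log γ * ((p - 4) / 2)) =
        Real.log γ - (Real.log 2 + Real.log (p - 4) + Real.log (p - 2)) by ring,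
      Real.exp_sub, Real.exp_add, Real.exp_add, Real.exp_log hγ, Real.exp_log two_pos,
      Real.exp_log hp4, Real.exp_log hp2]
  have E : (2:ℝ) ^ (p - 3) * X * D * (2 * (p - 4)) = γ := by
    rw [hX, hD]
    rw [Real.rpow_def_of_pos two_pos, Real.rpow_def_of_pos hp4, Real.rpow_def_of_pos hp2,
      Real.rpow_def_of_pos hγ, Real.rpow_def_of_pos hB0, hlogB]
    calc Real.exp (Real.log 2 * (p - 3)) *
          (p * Real.exp (Real.log (p - 4) * ((p - 4) / 2)) /
            (Real.exp (Real.log (p - 2) * (p / 2)) * a * Real.exp (Real.log γ * ((p - 4) / 2)) * KGN)) *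
          (a * (p - 2) / p * KGN *
            Real.exp ((Real.log (p - 2) + Real.log γ - (2 * Real.log 2 + Real.log (p - 4))) * (p / 2 - 1))) *
          (2 * (p - 4))
        = (Real.exp (Real.log 2 * (p - 3)) * Real.exp (Real.log (p - 4) * ((p - 4) / 2)) *
            Real.exp ((Real.log (p - 2) + Real.log γ - (2 * Real.log 2 + Real.log (p - 4))) * (p / 2 - 1)) /
            (Real.exp (Real.log (p - 2) * (p / 2)) * Real.exp (Real.log γ * ((p - 4) / 2)))) *
          ((p - 2) * (2 * (p - 4))) := by
          field_simp
      _ = γ := by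
          rw [key2, div_mul_eq_mul_div, mul_div_assoc,
            show (p - 2) * (2 * (p - 4)) = 2 * (p - 4) * (p - 2) from by ring,
            div_self (by positivity : (2 * (p - 4) * (p - 2)) ≠ 0), mul_one]
  have key : (2:ℝ) ^ (p - 3) * X ≤ c ^ (p - 3) := by
    have h5 : (2:ℝ) ^ (p - 3) * X = γ / (2 * (p - 4)) / D := by
      rw [div_div, eq_div_iff (by positivity : (0:ℝ) < 2 * (p - 4) * D).ne']
      linear_combination E
    rw [h5, div_le_iff₀ hD0]
    linarith [hmain]
  rw [ge_iff_le]
  calc 2 * X ^ (1 / (p - 3)) = ((2:ℝ) ^ (p - 3) * X) ^ (1 / (p - 3)) := by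
        rw [Real.mul_rpow (by positivity) hX0.le, ← Real.rpow_mul (by norm_num),
          mul_one_div, div_self hp3.ne', Real.rpow_one]
    _ ≤ (c ^ (p - 3)) ^ (1 / (p - 3)) := Real.rpow_le_rpow (by positivity) key (by positivity)
    _ = c := by
        rw [← Real.rpow_mul hc.le, mul_one_div, div_self hp3.ne', Real.rpow_one]

theorem mass_lower_bound_of_Q_nonpos
    (γ a p c KGN : ℝ) (hγ : 0 < γ) (ha : 0 < a) (hp : 4 < p) (hc : 0 < c) (hKGN : 0 < KGN)
    (u : EuclideanSpace ℝ (Fin 2) → ℝ)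
    (hu : ∫ x : EuclideanSpace ℝ (Fin 2), (u x) ^ 2 = c)
    (hGN : Cpow p u ≤ KGN * (gradNormSq u) ^ (p / 2 - 1) * c)
    (hQ : gradNormSq u - a * (p - 2) / p * Cpow p u - γ * c ^ 2 / 4 ≤ 0)
    (hA : gradNormSq u = (p - 2) * γ * c ^ 2 / (4 * (p - 4))) :
    c ≥ 2 * ((p * (p - 4) ^ ((p - 4) / 2))
        / ((p - 2) ^ (p / 2) * a * γ ^ ((p - 4) / 2) * KGN)) ^ (1 / (p - 3)) := by
  exact core γ a p c KGN (gradNormSq u) (Cpow p u) hγ ha hp hc hKGN hGN hQ hA
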